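/- In the symmetric group Sym_{n+1}, if σ₁σ₂⋯σ_k = σ is a reduced factorization (reflection lengths add) of a permutation σ into cyclic permutations σᵢ, then the hypergraph whose hyperedges are the supports of the σᵢ is a hyperforest. -/

import Mathlib

/-- An alternating path in a hypergraph: a list of vertices and a list of hyperedges,
with each hyperedge belonging to the hypergraph and containing the two vertices around it. -/
def IsHyperPath {V : Type*} (E : Finset (Finset V)) : List V → List (Finset V) → Prop
  | [_], [] => True
  | u :: v :: vs, e :: es => e ∈ E ∧ u ∈ e ∧ v ∈ e ∧ IsHyperPath E (v :: vs) es
  | _, _ => False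

/-- Two vertices are joined by a path in the hypergraph. -/
def Reachable {V : Type*} (E : Finset (Finset V)) (u v : V) : Prop :=
  ∃ vs es, IsHyperPath E vs es ∧ vs.head? = some u ∧ vs.getLast? = some v

/-- Every pair of vertices is joined by a path. -/
def Connected {V : Type*} (E : Finset (Finset V)) : Prop := ∀ u v, Reachable E u v

/-- A nontrivial simple cycle: a closed path of length at least two with distinct
hyperedges and distinct vertices except that the endpoints are equal. -/
def HasSimpleCycle {V : Type*} (E : Finset (Finset V)) : Prop :=
  ∃ (vs : List V) (es : List (Finset V)), IsHyperPath E vs es ∧ 2 ≤ es.length ∧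
    es.Nodup ∧ vs.dropLast.Nodup ∧ vs.head? = vs.getLast?

/-- A hyperforest: hyperedges have size at least two and there are no nontrivial simple cycles. -/
def IsHyperforest {V : Type*} (E : Finset (Finset V)) : Prop :=
  (∀ e ∈ E, 2 ≤ e.card) ∧ ¬ HasSimpleCycle E

/-- A hypertree is a connected hyperforest. -/
def IsHypertree {V : Type*} (E : Finset (Finset V)) : Prop := IsHyperforest E ∧ Connected E

/-- The irreducible permutation of a hyperedge: the cycle through its elements in increasing order. -/
def edgePerm {m : ℕ} (e : Finset (Fin m)) : Equiv.Perm (Fin m) :=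
  (e.sort (· ≤ ·)).formPerm

/-- The reflection (absolute) length of a permutation: the minimal number of
transpositions whose product is the permutation. -/
noncomputable def reflLen {α : Type*} [DecidableEq α] (σ : Equiv.Perm α) : ℕ :=
  sInf {k | ∃ l : List (Equiv.Perm α), l.prod = σ ∧ l.length = k ∧ ∀ t ∈ l, t.IsSwap}


open Equiv Equiv.Perm Module

section Core
variable {α : Type*} [Fintype α] [DecidableEq α]

lemma reflSet_nonempty (σ : Perm α) :
    {k | ∃ l : List (Perm α), l.prod = σ ∧ l.length = k ∧ ∀ t ∈ l, t.IsSwap}.Nonempty := by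
  obtain ⟨L, h1, h2⟩ := (Equiv.Perm.truncSwapFactors σ).out
  exact ⟨L.length, L, h1, rfl, h2⟩

lemma exists_reflLen_list (σ : Perm α) :
    ∃ L : List (Perm α), L.prod = σ ∧ L.length = reflLen σ ∧ ∀ t ∈ L, t.IsSwap :=
  Nat.sInf_mem (reflSet_nonempty σ)

lemma reflLen_le (σ : Perm α) (L : List (Perm α)) (h : L.prod = σ) (hs : ∀ t ∈ L, t.IsSwap) :
    reflLen σ ≤ L.length :=
  Nat.sInf_le ⟨L, h, rfl, hs⟩

/-- basis difference vectors -/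
noncomputable def dd (x : α) : EuclideanSpace ℝ α := EuclideanSpace.single x 1

lemma dd_sub_ne_zero {x y : α} (h : x ≠ y) : dd x - dd y ≠ 0 := by
  intro h0
  have := congrFun (congrArg (fun v : EuclideanSpace ℝ α => (v : α → ℝ)) h0) x
  simp [dd, EuclideanSpace.single_apply, h] at this

/-- the "moved space" of a permutation -/
noncomputable def Msp (σ : Perm α) : Submodule ℝ (EuclideanSpace ℝ α) :=
  Submodule.span ℝ (Set.range fun y => dd (σ y) - dd y)

lemma Msp_one : Msp (1 : Perm α) = ⊥ := by
  apply le_bot_iff.mp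
  rw [Msp, Submodule.span_le]
  rintro z ⟨y, rfl⟩
  simp

lemma Msp_mul (σ τ : Perm α) : Msp (σ * τ) ≤ Msp σ ⊔ Msp τ := by
  rw [Msp, Submodule.span_le]
  rintro z ⟨y, rfl⟩
  show dd ((σ * τ) y) - dd y ∈ (Msp σ ⊔ Msp τ : Submodule ℝ _)
  have h1 : dd ((σ * τ) y) - dd y = (dd (σ (τ y)) - dd (τ y)) + (dd (τ y) - dd y) := by
    rw [Equiv.Perm.mul_apply]; abel
  rw [h1]
  exact Submodule.add_mem_sup (Submodule.subset_span ⟨τ y, rfl⟩)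
    (Submodule.subset_span ⟨y, rfl⟩)

lemma finrank_Msp_swap {x y : α} (h : x ≠ y) : finrank ℝ (Msp (Equiv.swap x y)) ≤ 1 := by
  have hle : Msp (Equiv.swap x y) ≤ Submodule.span ℝ {dd x - dd y} := by
    rw [Msp, Submodule.span_le]
    rintro z ⟨w, rfl⟩
    show dd ((Equiv.swap x y) w) - dd w ∈ (Submodule.span ℝ {dd x - dd y} : Submodule ℝ _)
    rcases eq_or_ne w x with rfl | hwx
    · rw [Equiv.swap_apply_left]
      have h2 : dd y - dd w = -(dd w - dd y) := by abel
      rw [h2]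
      exact neg_mem (Submodule.mem_span_singleton_self _)
    rcases eq_or_ne w y with rfl | hwy
    · rw [Equiv.swap_apply_right]
      exact Submodule.mem_span_singleton_self _
    · rw [Equiv.swap_apply_of_ne_of_ne hwx hwy]
      simp
  calc finrank ℝ (Msp (Equiv.swap x y)) ≤ finrank ℝ (Submodule.span ℝ {dd x - dd y}) :=
        Submodule.finrank_mono hle
    _ = 1 := finrank_span_singleton (dd_sub_ne_zero h)

lemma finrank_sup_le (s t : Submodule ℝ (EuclideanSpace ℝ α)) :
    finrank ℝ ↥(s ⊔ t) ≤ finrank ℝ s + finrank ℝ t := by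
  have := Submodule.finrank_sup_add_finrank_inf_eq s t
  omega

lemma finrank_Msp_prod_le (L : List (Perm α)) (hs : ∀ t ∈ L, t.IsSwap) :
    finrank ℝ (Msp L.prod) ≤ L.length := by
  induction L with
  | nil => simp [Msp_one]; exact Submodule.finrank_eq_zero.mpr Msp_one
  | cons s L ih =>
    obtain ⟨x, y, hxy, rfl⟩ := hs s List.mem_cons_self
    have h1 : Msp (Equiv.swap x y * L.prod) ≤ Msp (Equiv.swap x y) ⊔ Msp L.prod := Msp_mul _ _
    calc finrank ℝ (Msp ((Equiv.swap x y :: L).prod))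
        ≤ finrank ℝ ↥(Msp (Equiv.swap x y) ⊔ Msp L.prod) := by
          rw [List.prod_cons]; exact Submodule.finrank_mono h1
      _ ≤ finrank ℝ (Msp (Equiv.swap x y)) + finrank ℝ (Msp L.prod) := finrank_sup_le _ _
      _ ≤ 1 + L.length := add_le_add (finrank_Msp_swap hxy)
          (ih (fun t ht => hs t (List.mem_cons_of_mem _ ht)))
      _ = (Equiv.swap x y :: L).length := by simp [add_comm]

lemma finrank_Msp_le_reflLen (σ : Perm α) : finrank ℝ (Msp σ) ≤ reflLen σ := by
  obtain ⟨L, rfl, hlen, hs⟩ := exists_reflLen_list σ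
  rw [← hlen]
  exact finrank_Msp_prod_le L hs

lemma pow_mem_Msp (τ : Perm α) (a : α) : ∀ i : ℕ, dd ((τ ^ i) a) - dd a ∈ Msp τ
  | 0 => by simp
  | (i + 1) => by
    have h1 : dd ((τ ^ (i+1)) a) - dd a
        = (dd (τ ((τ ^ i) a)) - dd ((τ ^ i) a)) + (dd ((τ ^ i) a) - dd a) := by
      rw [pow_succ', Equiv.Perm.mul_apply]; abel
    rw [h1]
    exact add_mem (Submodule.subset_span ⟨(τ ^ i) a, rfl⟩) (pow_mem_Msp τ a i)


/-- the fixed space of a permutation -/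
def Fixsp (σ : Perm α) : Submodule ℝ (EuclideanSpace ℝ α) where
  carrier := {v | ∀ y, v (σ y) = v y}
  add_mem' := by
    intro a b ha hb y
    simp only [PiLp.add_apply, ha y, hb y]
  zero_mem' := by intro y; simp
  smul_mem' := by
    intro c a ha y
    simp only [PiLp.smul_apply, ha y]

lemma mem_Fixsp {σ : Perm α} {v : EuclideanSpace ℝ α} :
    v ∈ Fixsp σ ↔ ∀ y, v (σ y) = v y := Iff.rfl

lemma Fixsp_prod (L : List (Perm α)) (v : EuclideanSpace ℝ α)
    (h : ∀ τ ∈ L, v ∈ Fixsp τ) : v ∈ Fixsp L.prod := by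
  induction L with
  | nil => intro y; simp
  | cons a L ih =>
    intro y
    rw [List.prod_cons, Equiv.Perm.mul_apply]
    rw [h a List.mem_cons_self _]
    exact ih (fun τ ht => h τ (List.mem_cons_of_mem _ ht)) y

lemma orth_mem_Fixsp {σ : Perm α} {v : EuclideanSpace ℝ α} (h : v ∈ (Msp σ)ᗮ) :
    v ∈ Fixsp σ := by
  intro y
  have h1 := (Submodule.mem_orthogonal _ _).mp h (dd (σ y) - dd y)
    (Submodule.subset_span ⟨y, rfl⟩)
  rw [inner_sub_left] at h1
  simp only [dd, EuclideanSpace.inner_single_left, map_one, one_mul] at h1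
  linarith [sub_eq_zero.mp h1]

/-- fixed space invariance for powers -/
lemma Fixsp_pow {σ : Perm α} {v : EuclideanSpace ℝ α} (h : v ∈ Fixsp σ) :
    ∀ (i : ℕ) (x : α), v ((σ ^ i) x) = v x := by
  intro i
  induction i with
  | zero => intro x; rw [pow_zero]; simp
  | succ i ih =>
    intro x
    rw [pow_succ, Equiv.Perm.mul_apply]
    rw [ih (σ x), h x]

/-- sup of a list of submodules -/
def listSup {M : Type*} [AddCommMonoid M] [Module ℝ M] (L : List (Submodule ℝ M)) :
    Submodule ℝ M := L.foldr (· ⊔ ·) ⊥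

lemma le_listSup {M : Type*} [AddCommMonoid M] [Module ℝ M] {L : List (Submodule ℝ M)}
    {S : Submodule ℝ M} (h : S ∈ L) : S ≤ listSup L := by
  induction L with
  | nil => simp at h
  | cons a L ih =>
    rcases List.mem_cons.mp h with rfl | h
    · exact le_sup_left
    · exact le_trans (ih h) le_sup_right

lemma listSup_le {M : Type*} [AddCommMonoid M] [Module ℝ M] {L : List (Submodule ℝ M)}
    {X : Submodule ℝ M} (h : ∀ S ∈ L, S ≤ X) : listSup L ≤ X := by
  induction L with
  | nil => exact bot_le
  | cons a L ih =>
    exact sup_le (h a List.mem_cons_self)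
      (ih (fun S hs => h S (List.mem_cons_of_mem _ hs)))

lemma listSup_perm {M : Type*} [AddCommMonoid M] [Module ℝ M] {L₁ L₂ : List (Submodule ℝ M)}
    (h : L₁.Perm L₂) : listSup L₁ = listSup L₂ := by
  induction h with
  | nil => rfl
  | cons x _ ih => simp only [listSup, List.foldr_cons] at *; rw [ih]
  | swap x y L => simp only [listSup, List.foldr_cons]; rw [sup_left_comm]
  | trans _ _ ih1 ih2 => rw [ih1, ih2]

lemma finrank_listSup_le (L : List (Submodule ℝ (EuclideanSpace ℝ α))) :
    finrank ℝ (listSup L) ≤ (L.map fun (S : Submodule ℝ (EuclideanSpace ℝ α)) => finrank ℝ S).sum := by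
  induction L with
  | nil => simp [listSup]; exact Submodule.finrank_eq_zero.mpr rfl
  | cons a L ih =>
    calc finrank ℝ (listSup (a :: L)) ≤ finrank ℝ a + finrank ℝ (listSup L) :=
          finrank_sup_le a (listSup L)
      _ ≤ finrank ℝ a + (L.map fun (S : Submodule ℝ (EuclideanSpace ℝ α)) => finrank ℝ S).sum := by omega
      _ = ((a :: L).map fun (S : Submodule ℝ (EuclideanSpace ℝ α)) => finrank ℝ S).sum := by simp


lemma cycle_fact : ∀ (k : ℕ) (c : Perm α), c.support.card ≤ k → c.IsCycle →
    ∃ L : List (Perm α), L.prod = c ∧ L.length + 1 ≤ c.support.card ∧ ∀ t ∈ L, t.IsSwap := by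
  intro k
  induction k with
  | zero => intro c hk hc; have := hc.two_le_card_support; omega
  | succ k ih =>
    intro c hk hc
    obtain ⟨x, hx, -⟩ := id hc
    by_cases h : c (c x) = x
    · have hcs : c = Equiv.swap x (c x) := hc.eq_swap_of_apply_apply_eq_self hx h
      refine ⟨[Equiv.swap x (c x)], by simp [← hcs], ?_, ?_⟩
      · have := hc.two_le_card_support; simp; omega
      · rintro t ht; rw [List.mem_singleton] at ht
        exact ht ▸ ⟨x, c x, Ne.symm hx, rfl⟩
    · have hg : (Equiv.swap x (c x) * c).IsCycle := hc.swap_mul hx h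
      have hcard : (Equiv.swap x (c x) * c).support.card < c.support.card :=
        Equiv.Perm.card_support_swap_mul hx
      obtain ⟨L, hL1, hL2, hL3⟩ := ih (Equiv.swap x (c x) * c) (by omega) hg
      refine ⟨Equiv.swap x (c x) :: L, ?_, by simp; omega, ?_⟩
      · rw [List.prod_cons, hL1, ← mul_assoc, Equiv.swap_mul_self, one_mul]
      · rintro t ht
        rcases List.mem_cons.mp ht with rfl | ht
        · exact ⟨x, c x, Ne.symm hx, rfl⟩
        · exact hL3 t ht

lemma cycles_fact (cf : List (Perm α)) (hc : ∀ c ∈ cf, c.IsCycle) :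
    ∃ L : List (Perm α), L.prod = cf.prod ∧
      L.length + cf.length ≤ (cf.map fun c => c.support.card).sum ∧ ∀ t ∈ L, t.IsSwap := by
  induction cf with
  | nil => exact ⟨[], by simp, by simp, by simp⟩
  | cons c cf ih =>
    obtain ⟨L1, h11, h12, h13⟩ :=
      cycle_fact c.support.card c le_rfl (hc c List.mem_cons_self)
    obtain ⟨L2, h21, h22, h23⟩ := ih (fun d hd => hc d (List.mem_cons_of_mem _ hd))
    refine ⟨L1 ++ L2, by rw [List.prod_append, h11, h21, List.prod_cons], ?_, ?_⟩
    · simp only [List.length_append, List.length_cons, List.map_cons, List.sum_cons]; omega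
    · intro t ht; rcases List.mem_append.mp ht with h | h
      exacts [h13 t h, h23 t h]

/-- union of supports of a list of permutations -/
def suppU (cf : List (Perm α)) : Finset α := cf.foldr (fun c A => c.support ∪ A) ∅

lemma mem_suppU {cf : List (Perm α)} {x : α} :
    x ∈ suppU cf ↔ ∃ c ∈ cf, x ∈ c.support := by
  induction cf with
  | nil => simp [suppU]
  | cons c cf ih =>
    show x ∈ c.support ∪ suppU cf ↔ _
    simp [Finset.mem_union, ih, List.mem_cons, or_and_right, exists_or]

lemma card_suppU (cf : List (Perm α)) (hd : cf.Pairwise Equiv.Perm.Disjoint) :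
    (suppU cf).card = (cf.map fun c => c.support.card).sum := by
  induction cf with
  | nil => simp [suppU]
  | cons c cf ih =>
    rw [List.pairwise_cons] at hd
    have hdisj : Disjoint c.support (suppU cf) := by
      rw [Finset.disjoint_left]
      intro x hx hx2
      obtain ⟨d, hdm, hxd⟩ := mem_suppU.mp hx2
      exact Finset.disjoint_left.mp (hd.1 d hdm).disjoint_support hx hxd
    show (c.support ∪ suppU cf).card = _
    rw [Finset.card_union_of_disjoint hdisj, ih hd.2]
    simp

lemma prod_fix (cf : List (Perm α)) {x : α} (h : ∀ d ∈ cf, d x = x) : cf.prod x = x := by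
  induction cf with
  | nil => simp
  | cons a cf ih =>
    rw [List.prod_cons, Equiv.Perm.mul_apply,
      ih (fun d hd => h d (List.mem_cons_of_mem _ hd)), h a List.mem_cons_self]

lemma prod_apply_mem (cf : List (Perm α)) (hd : cf.Pairwise Equiv.Perm.Disjoint)
    {c : Perm α} (hc : c ∈ cf) {x : α} (hx : x ∈ c.support) : cf.prod x = c x := by
  induction cf with
  | nil => simp at hc
  | cons a cf ih =>
    rw [List.pairwise_cons] at hd
    rw [List.prod_cons, Equiv.Perm.mul_apply]
    rcases List.mem_cons.mp hc with rfl | hc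
    · rw [prod_fix cf (fun d hdm =>
        (hd.1 d hdm x).resolve_left (Equiv.Perm.mem_support.mp hx))]
    · rw [ih hd.2 hc]
      exact (hd.1 c hc (c x)).resolve_right
        (Equiv.Perm.mem_support.mp (Equiv.Perm.apply_mem_support.mpr hx))

lemma prod_pow_apply_mem (cf : List (Perm α)) (hd : cf.Pairwise Equiv.Perm.Disjoint)
    {c : Perm α} (hc : c ∈ cf) {x : α} (hx : x ∈ c.support) :
    ∀ i : ℕ, (cf.prod ^ i) x = (c ^ i) x := by
  intro i
  induction i with
  | zero => simp
  | succ i ih =>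
    rw [pow_succ', pow_succ', Equiv.Perm.mul_apply, Equiv.Perm.mul_apply, ih,
      prod_apply_mem cf hd hc (Equiv.Perm.pow_apply_mem_support.mpr hx)]

lemma fix_dim_bound [Nonempty α] (σ : Perm α) (cf : List (Perm α)) (hp : cf.prod = σ)
    (hc : ∀ c ∈ cf, c.IsCycle) (hd : cf.Pairwise Equiv.Perm.Disjoint) :
    finrank ℝ (Fixsp σ) + (cf.map fun c => c.support.card).sum
      ≤ Fintype.card α + cf.length := by
  classical
  have hne : ∀ c ∈ cf, c.support.Nonempty := fun c hcm =>
    Finset.card_pos.mp (by have := (hc c hcm).two_le_card_support; omega)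
  set rep : Perm α → α :=
    fun c => if h : c.support.Nonempty then h.choose else Classical.arbitrary α with hrepdef
  have hrep : ∀ c ∈ cf, rep c ∈ c.support := by
    intro c hcm
    rw [hrepdef]
    simp only [dif_pos (hne c hcm)]
    exact (hne c hcm).choose_spec
  set R : Finset α := (Finset.univ \ suppU cf) ∪ (cf.map rep).toFinset with hRdef
  have hcardR : R.card ≤ (Fintype.card α - (suppU cf).card) + cf.length := by
    calc R.card ≤ (Finset.univ \ suppU cf).card + (cf.map rep).toFinset.card :=
          Finset.card_union_le _ _
      _ ≤ (Fintype.card α - (suppU cf).card) + cf.length := by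
          rw [Finset.card_sdiff_of_subset (Finset.subset_univ _), Finset.card_univ]
          have := (cf.map rep).toFinset_card_le
          simp only [List.length_map] at this
          omega
  let Φ : Fixsp σ →ₗ[ℝ] (↥R → ℝ) :=
    { toFun := fun v r => (v : EuclideanSpace ℝ α) r
      map_add' := fun v w => by funext r; simp
      map_smul' := fun c v => by funext r; simp }
  have hinj : Function.Injective Φ := by
    rw [injective_iff_map_eq_zero]
    intro v hv
    have hv' : ∀ r (hr : r ∈ R), (v : EuclideanSpace ℝ α) r = 0 := fun r hr =>
      congrFun hv ⟨r, hr⟩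
    have hvz : (v : EuclideanSpace ℝ α) = 0 := by
      ext x
      by_cases hx : x ∈ suppU cf
      · obtain ⟨c, hcm, hxc⟩ := mem_suppU.mp hx
        obtain ⟨i, hi⟩ := (hc c hcm).exists_pow_eq (Equiv.Perm.mem_support.mp hxc)
          (Equiv.Perm.mem_support.mp (hrep c hcm))
        have h1 : (σ ^ i) x = rep c := by
          rw [← hp, prod_pow_apply_mem cf hd hcm hxc i]; exact hi
        have h2 : (v : EuclideanSpace ℝ α) x = (v : EuclideanSpace ℝ α) (rep c) := by
          rw [← h1]; exact (Fixsp_pow v.2 i x).symm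
        rw [h2]
        refine hv' _ (Finset.mem_union_right _ ?_)
        rw [List.mem_toFinset, List.mem_map]
        exact ⟨c, hcm, rfl⟩
      · exact hv' x (Finset.mem_union_left _ (by simp [hx]))
    exact Subtype.ext hvz
  have hF : finrank ℝ (Fixsp σ) ≤ R.card := by
    have := LinearMap.finrank_le_finrank_of_injective hinj
    rwa [Module.finrank_fintype_fun_eq_card, Fintype.card_coe] at this
  have hS : (suppU cf).card ≤ Fintype.card α := Finset.card_le_univ _
  have := card_suppU cf hd
  omega

end Core


section Path
variable {α : Type*} [Fintype α] [DecidableEq α]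

noncomputable def Zsp (e : Finset α) : Submodule ℝ (EuclideanSpace ℝ α) :=
  Submodule.span ℝ {x | ∃ a ∈ e, ∃ b ∈ e, x = dd a - dd b}

lemma mem_Zsp {e : Finset α} {a b : α} (ha : a ∈ e) (hb : b ∈ e) : dd a - dd b ∈ Zsp e :=
  Submodule.subset_span ⟨a, ha, b, hb, rfl⟩

lemma Zsp_le_Msp {τ : Equiv.Perm α} (hτ : τ.IsCycle) : Zsp τ.support ≤ Msp τ := by
  rw [Zsp, Submodule.span_le]
  rintro z ⟨a, ha, b, hb, rfl⟩
  show dd a - dd b ∈ (Msp τ : Submodule ℝ _)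
  obtain ⟨i, hi⟩ := hτ.exists_pow_eq (Equiv.Perm.mem_support.mp hb)
    (Equiv.Perm.mem_support.mp ha)
  have h0 := pow_mem_Msp τ b i
  rw [hi] at h0
  exact h0

lemma hyperpath_length {E : Finset (Finset α)} :
    ∀ (es : List (Finset α)) (vs : List α), IsHyperPath E vs es →
      vs.length = es.length + 1 := by
  intro es
  induction es with
  | nil =>
    intro vs h
    cases vs with
    | nil => simp [IsHyperPath] at h
    | cons u t =>
      cases t with
      | nil => rfl
      | cons v t => simp [IsHyperPath] at h
  | cons e es ih =>
    intro vs h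
    cases vs with
    | nil => simp [IsHyperPath] at h
    | cons u t =>
      cases t with
      | nil => simp [IsHyperPath] at h
      | cons v t =>
        obtain ⟨-, -, -, h'⟩ := h
        have := ih (v :: t) h'
        simp only [List.length_cons] at this ⊢
        omega

lemma hyperpath_tele {E : Finset (Finset α)} :
    ∀ (es : List (Finset α)) (vs : List α), IsHyperPath E vs es →
      (∀ e ∈ es, e ∈ E) ∧
      ∀ a w, vs.head? = some a → vs.getLast? = some w →
        dd w - dd a ∈ listSup (es.map Zsp) := by
  intro es
  induction es with
  | nil =>
    intro vs h
    cases vs with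
    | nil => simp [IsHyperPath] at h
    | cons u t =>
      cases t with
      | nil =>
        refine ⟨by simp, ?_⟩
        intro a w ha hw
        simp only [List.head?_cons, Option.some_inj] at ha
        simp only [List.getLast?_singleton, Option.some_inj] at hw
        subst ha; subst hw
        simp
      | cons v t => simp [IsHyperPath] at h
  | cons e es ih =>
    intro vs h
    cases vs with
    | nil => simp [IsHyperPath] at h
    | cons u t =>
      cases t with
      | nil => simp [IsHyperPath] at h
      | cons v t =>
        obtain ⟨he, h_u, h_v, h'⟩ := h
        obtain ⟨ihE, ihW⟩ := ih (v :: t) h'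
        refine ⟨?_, ?_⟩
        · intro e' he'
          rcases List.mem_cons.mp he' with rfl | he'
          exacts [he, ihE e' he']
        · intro a w ha hw
          simp only [List.head?_cons, Option.some_inj] at ha
          subst ha
          rw [List.getLast?_cons_cons] at hw
          have hmem := ihW v w rfl hw
          have heq : dd w - dd u = (dd v - dd u) + (dd w - dd v) := by abel
          rw [heq]
          show _ ∈ listSup ((e :: es).map Zsp)
          have h0 : listSup ((e :: es).map Zsp) = Zsp e ⊔ listSup (es.map Zsp) := rfl
          rw [h0]
          exact Submodule.add_mem_sup (mem_Zsp h_v h_u) hmem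

end Path

/-- If σ₁σ₂⋯σ_k = σ is a reduced factorization of a permutation of Fin (n+1) into cycles,
then the supports of the factors form a hyperforest.  (The product σ₁σ₂⋯σ_k is taken in the
left-to-right order of the list, i.e. it is the product of the reversed list in Mathlib's
convention.) -/
theorem stmt11 (n : ℕ) (σ : Equiv.Perm (Fin (n + 1)))
    (l : List (Equiv.Perm (Fin (n + 1)))) (hcyc : ∀ τ ∈ l, τ.IsCycle)
    (hprod : l.reverse.prod = σ) (hred : (l.map reflLen).sum = reflLen σ) :
    IsHyperforest (l.map Equiv.Perm.support).toFinset := by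
  classical
  constructor
  · intro e he
    rw [List.mem_toFinset, List.mem_map] at he
    obtain ⟨τ, hτ, rfl⟩ := he
    exact (hcyc τ hτ).two_le_card_support
  · rintro ⟨vs, es, hp, hlen2, hesnd, hvsnd, hcl⟩
    set E := (l.map Equiv.Perm.support).toFinset with hE
    -- shapes
    cases es with
    | nil => simp at hlen2
    | cons e1 es' =>
    cases vs with
    | nil => simp [IsHyperPath] at hp
    | cons u t0 =>
    cases t0 with
    | nil => simp [IsHyperPath] at hp
    | cons v t =>
    have hp0 := hp
    simp only [IsHyperPath] at hp0
    obtain ⟨he1, hu, hv, hp'⟩ := hp0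
    -- list lengths
    have hlen := hyperpath_length (e1 :: es') (u :: v :: t) hp
    have htne : t ≠ [] := by
      intro h0
      subst h0
      simp at hlen
      rw [hlen] at hlen2
      simp at hlen2
    -- u ≠ v
    have hdl : (u :: v :: t).dropLast = u :: (v :: t).dropLast := by
      cases t with
      | nil => exact absurd rfl htne
      | cons x t' => rfl
    have hdl2 : (v :: t).dropLast = v :: t.dropLast := by
      cases t with
      | nil => exact absurd rfl htne
      | cons x t' => rfl
    have huv : u ≠ v := by
      rw [hdl, hdl2] at hvsnd
      have := (List.nodup_cons.mp hvsnd).1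
      intro h0
      exact this (h0 ▸ List.mem_cons_self (a := v))
    -- the factor for e1
    have he1' := he1
    rw [hE, List.mem_toFinset, List.mem_map] at he1'
    obtain ⟨τ₁, hτ₁l, hτ₁s⟩ := he1'
    -- telescoping along the rest of the cycle
    obtain ⟨hEes', hW⟩ := hyperpath_tele es' (v :: t) hp'
    have hgl : (u :: v :: t).getLast? = (v :: t).getLast? := List.getLast?_cons_cons ..
    have hlast : (v :: t).getLast? = some u := by
      rw [← hgl, ← hcl]; rfl
    have hrestvec : dd u - dd v ∈ listSup (es'.map Zsp) := hW v u rfl hlast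
    -- the rest submodule
    set MspSupL := listSup ((l.erase τ₁).map Msp) with hMspSupL
    have hrest : listSup (es'.map Zsp) ≤ MspSupL := by
      apply listSup_le
      intro S hS
      rw [List.mem_map] at hS
      obtain ⟨e', he'mem, rfl⟩ := hS
      have he'E := hEes' e' he'mem
      rw [hE, List.mem_toFinset, List.mem_map] at he'E
      obtain ⟨τ', hτ'l, hτ's⟩ := he'E
      have he'ne : e' ≠ e1 := by
        intro h0
        exact (List.nodup_cons.mp hesnd).1 (h0 ▸ he'mem)
      have hτ'ne : τ' ≠ τ₁ := by
        intro h0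
        exact he'ne (by rw [← hτ's, h0, hτ₁s])
      have hτ'er : τ' ∈ l.erase τ₁ := (List.mem_erase_of_ne hτ'ne).mpr hτ'l
      calc Zsp e' ≤ Msp τ' := by rw [← hτ's]; exact Zsp_le_Msp (hcyc τ' hτ'l)
        _ ≤ MspSupL := le_listSup (List.mem_map.mpr ⟨τ', hτ'er, rfl⟩)
    -- the nonzero vector in the intersection
    have hu0ne : dd v - dd u ≠ 0 := dd_sub_ne_zero (Ne.symm huv)
    have hu0l : dd v - dd u ∈ Msp τ₁ := by
      have := Zsp_le_Msp (hcyc τ₁ hτ₁l)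
      rw [hτ₁s] at this
      exact this (mem_Zsp hv hu)
    have hu0r : dd v - dd u ∈ MspSupL := by
      have := hrest hrestvec
      have h0 : dd v - dd u = -(dd u - dd v) := by abel
      rw [h0]
      exact neg_mem this
    have h1le : 1 ≤ finrank ℝ ↥(Msp τ₁ ⊓ MspSupL) := by
      rw [Nat.one_le_iff_ne_zero]
      intro h0
      rw [Submodule.finrank_eq_zero] at h0
      have : dd v - dd u ∈ (⊥ : Submodule ℝ (EuclideanSpace ℝ (Fin (n+1)))) := by
        rw [← h0]; exact Submodule.mem_inf.mpr ⟨hu0l, hu0r⟩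
      exact hu0ne (Submodule.mem_bot ℝ |>.mp this)
    -- assembling ranks
    set W := listSup (l.map Msp) with hWdef
    have hperm : l.Perm (τ₁ :: l.erase τ₁) := List.perm_cons_erase hτ₁l
    have hWeq : W = Msp τ₁ ⊔ MspSupL := by
      rw [hWdef, listSup_perm (hperm.map Msp)]; rfl
    have hsupinf := Submodule.finrank_sup_add_finrank_inf_eq (Msp τ₁) MspSupL
    have h3 : finrank ℝ MspSupL
        ≤ ((l.erase τ₁).map fun τ => finrank ℝ (Msp τ)).sum := by
      have := finrank_listSup_le ((l.erase τ₁).map Msp)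
      rwa [List.map_map] at this
    have h4 : (l.map fun τ => finrank ℝ (Msp τ)).sum
        = finrank ℝ (Msp τ₁) + ((l.erase τ₁).map fun τ => finrank ℝ (Msp τ)).sum := by
      rw [(hperm.map fun τ => finrank ℝ (Msp τ)).sum_eq]
      simp
    have h5 : (l.map fun τ => finrank ℝ (Msp τ)).sum ≤ (l.map reflLen).sum :=
      List.sum_le_sum (fun τ _ => finrank_Msp_le_reflLen τ)
    have h2 : finrank ℝ W + 1 ≤ (l.map reflLen).sum := by
      rw [hWeq]
      omega
    -- the other side: reflLen σ ≤ finrank W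
    obtain ⟨cf, hcfp, hcfc, hcfd⟩ := (Equiv.Perm.truncCycleFactors σ).out
    obtain ⟨L, hL1, hL2, hL3⟩ := cycles_fact cf hcfc
    have hrl : reflLen σ ≤ L.length := reflLen_le σ L (by rw [hL1, hcfp]) hL3
    have hfix := fix_dim_bound σ cf hcfp hcfc hcfd
    have horth := Submodule.finrank_add_finrank_orthogonal W
    rw [finrank_euclideanSpace] at horth
    have hWF : finrank ℝ Wᗮ ≤ finrank ℝ (Fixsp σ) := by
      apply Submodule.finrank_mono
      intro x hx
      rw [← hprod]
      apply Fixsp_prod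
      intro τ hτ
      rw [List.mem_reverse] at hτ
      have hMW : Msp τ ≤ W := le_listSup (List.mem_map.mpr ⟨τ, hτ, rfl⟩)
      exact orth_mem_Fixsp (Submodule.orthogonal_le hMW hx)
    rw [hred] at h2
    omega
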